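/- For every positive integer n, ∑_{π ∈ 𝔖_n} (−1)^{inv(π)} q^{depth(π)} = (1 − q)^{n−1} as polynomials in q over the integers. -/

import Mathlib

open Finset

/-- The one-line notation value of `π` at position `k ∈ {1,…,n}`:
`oneLine π k = π(k)` with `1`-indexed positions and values. -/
def oneLine {n : ℕ} (π : Equiv.Perm (Fin n)) (k : ℕ) : ℕ :=
  if h : k - 1 < n then ((π ⟨k - 1, h⟩ : Fin n) : ℕ) + 1 else k

/-- `SUC(π) = {i ∈ {1,…,n-1} : π(i+1) = π(i)+1}` (position set). -/
def SUC {n : ℕ} (π : Equiv.Perm (Fin n)) : Finset ℕ :=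
  (Finset.Icc 1 (n - 1)).filter (fun i => oneLine π (i + 1) = oneLine π i + 1)

/-- `FIX(π) = {i ∈ {1,…,n-1} : π(i) = i}` (position set). -/
def FIX {n : ℕ} (π : Equiv.Perm (Fin n)) : Finset ℕ :=
  (Finset.Icc 1 (n - 1)).filter (fun i => oneLine π i = i)

/-- `Asc₂(π) = {π(i+1) : i ∈ {1,…,n-1}, π(i+1) ≥ π(i)+2}` (value set). -/
def Asc2 {n : ℕ} (π : Equiv.Perm (Fin n)) : Finset ℕ :=
  ((Finset.Icc 1 (n - 1)).filter (fun i => oneLine π i + 2 ≤ oneLine π (i + 1))).image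
    (fun i => oneLine π (i + 1))

/-- `Des(π) = {π(i+1) : i ∈ {1,…,n-1}, π(i) > π(i+1)}` (value set). -/
def DesSet {n : ℕ} (π : Equiv.Perm (Fin n)) : Finset ℕ :=
  ((Finset.Icc 1 (n - 1)).filter (fun i => oneLine π (i + 1) < oneLine π i)).image
    (fun i => oneLine π (i + 1))

/-- `Suc(π) = {π(i+1) : i ∈ {1,…,n-1}, π(i+1) = π(i)+1}` (value set). -/
def SucSet {n : ℕ} (π : Equiv.Perm (Fin n)) : Finset ℕ :=
  ((Finset.Icc 1 (n - 1)).filter (fun i => oneLine π (i + 1) = oneLine π i + 1)).image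
    (fun i => oneLine π (i + 1))

/-- `Aexc(π) = {π(i) : i ∈ {2,…,n}, π(i) < i}` (value set). -/
def Aexc {n : ℕ} (π : Equiv.Perm (Fin n)) : Finset ℕ :=
  ((Finset.Icc 2 n).filter (fun i => oneLine π i < i)).image (fun i => oneLine π i)

/-- `Êxc(π) = {π(i) : i ∈ {2,…,n}, π(i) > i}` (value set). -/
def ExcHat {n : ℕ} (π : Equiv.Perm (Fin n)) : Finset ℕ :=
  ((Finset.Icc 2 n).filter (fun i => i < oneLine π i)).image (fun i => oneLine π i)

/-- `F̂ix(π) = {π(i) : i ∈ {2,…,n}, π(i) = i}` (value set). -/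
def FixHat {n : ℕ} (π : Equiv.Perm (Fin n)) : Finset ℕ :=
  ((Finset.Icc 2 n).filter (fun i => oneLine π i = i)).image (fun i => oneLine π i)

/-- `depth(π) = ∑_{i : π(i) > i} (π(i) − i)`. -/
def depthStat {n : ℕ} (π : Equiv.Perm (Fin n)) : ℕ :=
  ∑ i ∈ (Finset.Icc 1 n).filter (fun i => i < oneLine π i), (oneLine π i - i)

/-- `drp(π) = ∑_{i ∈ {1,…,n-1} : π(i) > π(i+1)} (π(i) − π(i+1))`. -/
def drpStat {n : ℕ} (π : Equiv.Perm (Fin n)) : ℕ :=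
  ∑ i ∈ (Finset.Icc 1 (n - 1)).filter (fun i => oneLine π (i + 1) < oneLine π i),
    (oneLine π i - oneLine π (i + 1))

/-- `exc(π) = |{i ∈ {1,…,n} : π(i) > i}|`. -/
def excNum {n : ℕ} (π : Equiv.Perm (Fin n)) : ℕ :=
  ((Finset.Icc 1 n).filter (fun i => i < oneLine π i)).card

/-- `nexc(π) = |{i ∈ {1,…,n} : π(i) < i}|`. -/
def nexcNum {n : ℕ} (π : Equiv.Perm (Fin n)) : ℕ :=
  ((Finset.Icc 1 n).filter (fun i => oneLine π i < i)).card

/-- `des(π) = |{i ∈ {1,…,n-1} : π(i) > π(i+1)}|`. -/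
def desNum {n : ℕ} (π : Equiv.Perm (Fin n)) : ℕ :=
  ((Finset.Icc 1 (n - 1)).filter (fun i => oneLine π (i + 1) < oneLine π i)).card

/-- `asc(π) = |{i ∈ {1,…,n-1} : π(i) < π(i+1)}|`. -/
def ascNum {n : ℕ} (π : Equiv.Perm (Fin n)) : ℕ :=
  ((Finset.Icc 1 (n - 1)).filter (fun i => oneLine π i < oneLine π (i + 1))).card

/-- `inv(π) = |{(i,j) : 1 ≤ i < j ≤ n, π(i) > π(j)}|`. -/
def invNum {n : ℕ} (π : Equiv.Perm (Fin n)) : ℕ :=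
  (((Finset.Icc 1 n) ×ˢ (Finset.Icc 1 n)).filter
    (fun p : ℕ × ℕ => p.1 < p.2 ∧ oneLine π p.2 < oneLine π p.1)).card

section Aux
open Equiv Equiv.Perm Polynomial

private lemma oneLine_succ' {n : ℕ} (π : Equiv.Perm (Fin n)) (k : Fin n) :
    oneLine π ((k : ℕ) + 1) = (π k : ℕ) + 1 := by
  simp [oneLine, k.isLt]

private lemma sign_eq_signAux' {n : ℕ} (π : Equiv.Perm (Fin n)) :
    Equiv.Perm.sign π = Equiv.Perm.signAux π := by
  match n with
  | 0 =>
    have : π = 1 := Subsingleton.elim _ _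
    subst this; rw [signAux_one, map_one]
  | 1 =>
    have : π = 1 := Subsingleton.elim _ _
    subst this; rw [signAux_one, map_one]
  | (m+2) =>
    have hs : Function.Surjective
        (MonoidHom.mk' signAux signAux_mul : Perm (Fin (m+2)) →* ℤˣ) := by
      intro u
      rcases Int.units_eq_one_or u with rfl | rfl
      · exact ⟨1, signAux_one _⟩
      · exact ⟨Equiv.swap 0 1, signAux_swap
          (show (⟨0, by omega⟩ : Fin (m+2)) ≠ ⟨1, by omega⟩ from by simp [Fin.ext_iff])⟩
    have := Equiv.Perm.eq_sign_of_surjective_hom hs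
    rw [← this]; rfl

private lemma invNum_card' {n : ℕ} (π : Equiv.Perm (Fin n)) :
    ((Equiv.Perm.finPairsLT n).filter (fun x => π x.1 ≤ π x.2)).card = invNum π := by
  rw [invNum]
  apply Finset.card_bij (fun x _ => (((x.2 : ℕ) + 1, (x.1 : ℕ) + 1) : ℕ × ℕ))
  · rintro ⟨a, b⟩ hx
    simp only [Finset.mem_filter, mem_finPairsLT] at hx
    obtain ⟨hba, hle⟩ := hx
    have hne : π a ≠ π b := fun h =>
      absurd (π.injective h) (fun h' => by subst h'; exact lt_irrefl _ hba)
    have hlt : π a < π b := lt_of_le_of_ne hle hne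
    simp only [Finset.mem_filter, Finset.mem_product, Finset.mem_Icc, oneLine_succ']
    refine ⟨⟨⟨by omega, by have := b.isLt; omega⟩, ⟨by omega, by have := a.isLt; omega⟩⟩, ?_, ?_⟩
    · have := hba; simp only [Fin.lt_def] at this; omega
    · simp only [Fin.lt_def] at hlt; omega
  · rintro ⟨a, b⟩ ha ⟨c, d⟩ hc h
    simp only [Prod.mk.injEq, add_left_inj] at h
    obtain ⟨h1, h2⟩ := h
    have hbd : b = d := Fin.ext h1
    have hac : a = c := Fin.ext h2
    subst hac; subst hbd; rfl
  · rintro ⟨i, j⟩ hp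
    simp only [Finset.mem_filter, Finset.mem_product, Finset.mem_Icc] at hp
    obtain ⟨⟨⟨hi1, hin⟩, ⟨hj1, hjn⟩⟩, hij, hlt⟩ := hp
    have hj' : j - 1 < n := by omega
    have hi' : i - 1 < n := by omega
    refine ⟨⟨⟨j - 1, hj'⟩, ⟨i - 1, hi'⟩⟩, ?_, ?_⟩
    · simp only [Finset.mem_filter, mem_finPairsLT]
      constructor
      · simp only [Fin.lt_def]; omega
      · have e1 : i = ((⟨i - 1, hi'⟩ : Fin n) : ℕ) + 1 := by simp; omega
        have e2 : j = ((⟨j - 1, hj'⟩ : Fin n) : ℕ) + 1 := by simp; omega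
        rw [e1, e2, oneLine_succ', oneLine_succ'] at hlt
        rw [Fin.le_def]; omega
    · simp; omega

private lemma sign_eq_neg_one_pow_invNum' {n : ℕ} (π : Equiv.Perm (Fin n)) :
    ((Equiv.Perm.sign π : ℤ)) = (-1) ^ invNum π := by
  rw [sign_eq_signAux' π, ← invNum_card' π]
  have h : Equiv.Perm.signAux π
      = ∏ x ∈ Equiv.Perm.finPairsLT n, if π x.1 ≤ π x.2 then (-1 : ℤˣ) else 1 := rfl
  rw [h]
  rw [show ((∏ x ∈ Equiv.Perm.finPairsLT n, if π x.1 ≤ π x.2 then (-1 : ℤˣ) else 1 : ℤˣ) : ℤ)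
      = ∏ x ∈ Equiv.Perm.finPairsLT n, ((if π x.1 ≤ π x.2 then (-1 : ℤˣ) else 1 : ℤˣ) : ℤ)
    from map_prod (Units.coeHom ℤ) _ _]
  simp only [apply_ite (fun (u : ℤˣ) => (u : ℤ)), Units.val_neg, Units.val_one]
  rw [Finset.prod_ite, Finset.prod_const, Finset.prod_const, one_pow, mul_one]

private lemma sum_Icc_one' (n : ℕ) (f : ℕ → ℕ) :
    ∑ i ∈ Finset.Icc 1 n, f i = ∑ k : Fin n, f ((k : ℕ) + 1) := by
  rw [Fin.sum_univ_eq_sum_range (fun j => f (j + 1))]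
  induction n with
  | zero => simp
  | succ m ih =>
    rw [Finset.sum_Icc_succ_top (by omega), ih, Finset.sum_range_succ]

private lemma depth_eq' {n : ℕ} (π : Equiv.Perm (Fin n)) :
    depthStat π = ∑ k : Fin n, ((π k : ℕ) - (k : ℕ)) := by
  rw [depthStat, Finset.sum_filter_of_ne (fun x _ hx => by omega)]
  rw [sum_Icc_one']
  apply Finset.sum_congr rfl
  intro k _
  rw [oneLine_succ']
  omega

private lemma det_M' (m : ℕ) :
    (Matrix.of fun i j : Fin (m+1) => (X : Polynomial ℤ) ^ ((i : ℕ) - (j : ℕ))).det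
      = (1 - X) ^ m := by
  set R := Polynomial ℤ
  set M : Matrix (Fin (m+1)) (Fin (m+1)) R :=
    Matrix.of fun i j => (X : R) ^ ((i : ℕ) - (j : ℕ)) with hM
  set E : Matrix (Fin (m+1)) (Fin (m+1)) R :=
    Matrix.of fun i j => (if j = i then (1 : R) else 0) +
      (if ((j : ℕ) + 1 = (i : ℕ)) then -X else 0) with hEdef
  have hentry : ∀ (i j : Fin (m+1)), (E * M) i j
      = M i j + ∑ k : Fin (m+1), (if ((k : ℕ) + 1 = (i : ℕ)) then -(X * M k j) else 0) := by
    intro i j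
    rw [Matrix.mul_apply]
    simp only [hEdef, Matrix.of_apply, add_mul, ite_mul, one_mul, zero_mul, neg_mul]
    rw [Finset.sum_add_distrib, Finset.sum_ite_eq' Finset.univ i (fun k => M k j),
      if_pos (Finset.mem_univ i)]
    congr 1; apply Finset.sum_congr rfl; intro k _; split_ifs <;> ring
  have hzero : ∀ j : Fin (m+1), ∑ k : Fin (m+1),
      (if ((k : ℕ) + 1 = ((0 : Fin (m+1)) : ℕ)) then -(X * M k j) else 0) = 0 := by
    intro j; apply Finset.sum_eq_zero; intro k _; simp
  have hsucc : ∀ (a : Fin m) (j : Fin (m+1)), ∑ k : Fin (m+1),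
      (if ((k : ℕ) + 1 = ((a.succ : Fin (m+1)) : ℕ)) then -(X * M k j) else 0)
        = -(X * M a.castSucc j) := by
    intro a j
    have hc : ∀ k : Fin (m+1), (if ((k : ℕ) + 1 = ((a.succ : Fin (m+1)) : ℕ))
        then -(X * M k j) else 0) = (if k = a.castSucc then -(X * M k j) else 0) := by
      intro k
      apply if_congr _ rfl rfl
      rw [Fin.ext_iff]
      simp only [Fin.val_succ, Fin.coe_castSucc]
      omega
    rw [Finset.sum_congr rfl (fun k _ => hc k),
      Finset.sum_ite_eq' Finset.univ (a.castSucc) (fun k => -(X * M k j)),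
      if_pos (Finset.mem_univ _)]
  have htri : (E * M).BlockTriangular id := by
    intro i j hij
    simp only [id] at hij
    induction i using Fin.cases with
    | zero => exact absurd hij (Fin.not_lt_zero _).elim
    | succ a =>
      rw [hentry, hsucc]
      simp only [hM, Matrix.of_apply, Fin.val_succ, Fin.coe_castSucc]
      have hja : (j : ℕ) ≤ (a : ℕ) := by
        have := hij; rw [Fin.lt_def] at this; simp at this; omega
      rw [show (a : ℕ) + 1 - (j : ℕ) = ((a : ℕ) - (j : ℕ)) + 1 by omega, pow_succ]
      ring
  have hdet : (E * M).det = (1 - X) ^ m := by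
    rw [Matrix.det_of_upperTriangular htri]
    rw [Fin.prod_univ_succ]
    have h0 : (E * M) 0 0 = 1 := by
      rw [hentry, hzero]
      simp [hM]
    have hs : ∀ a : Fin m, (E * M) a.succ a.succ = 1 - X := by
      intro a
      rw [hentry, hsucc]
      simp only [hM, Matrix.of_apply, Fin.val_succ, Fin.coe_castSucc]
      rw [Nat.sub_self, show (a : ℕ) - ((a : ℕ) + 1) = 0 by omega]
      ring
    rw [h0, one_mul]
    rw [Finset.prod_congr rfl (fun a _ => hs a), Finset.prod_const]
    simp
  have hEtri : E.BlockTriangular OrderDual.toDual := by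
    intro i j hij
    have : (i : ℕ) < (j : ℕ) := hij
    simp only [hEdef, Matrix.of_apply]
    rw [if_neg (by omega), if_neg (by omega)]
    ring
  have hEdet : E.det = 1 := by
    rw [Matrix.det_of_lowerTriangular E hEtri]
    apply Finset.prod_eq_one
    intro i _
    simp [hEdef]
  calc M.det = E.det * M.det := by rw [hEdet, one_mul]
    _ = (E * M).det := (Matrix.det_mul _ _).symm
    _ = (1 - X) ^ m := hdet

end Aux

/-- ∑ (−1)^{inv(π)} q^{depth(π)} = (1 − q)^{n−1}. -/

theorem stmt7 (n : ℕ) (hn : 0 < n) :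
    (∑ π : Equiv.Perm (Fin n),
        (-1 : Polynomial ℤ) ^ invNum π * Polynomial.X ^ depthStat π) =
      (1 - Polynomial.X : Polynomial ℤ) ^ (n - 1) := by
  obtain ⟨m, rfl⟩ : ∃ m, n = m + 1 := ⟨n - 1, by omega⟩
  rw [show m + 1 - 1 = m from rfl, ← det_M' m, Matrix.det_apply]
  apply Finset.sum_congr rfl
  intro π _
  have h1 : ∏ i, (Matrix.of fun i j : Fin (m+1) =>
        (Polynomial.X : Polynomial ℤ) ^ ((i : ℕ) - (j : ℕ))) (π i) i
      = Polynomial.X ^ depthStat π := by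
    simp only [Matrix.of_apply]
    rw [Finset.prod_pow_eq_pow_sum, depth_eq']
  rw [h1, Units.smul_def, zsmul_eq_mul, sign_eq_neg_one_pow_invNum' π]
  push_cast
  ring
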